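/- Let $V$ be a type, $S, Z \subseteq V$ disjoint sets, and let $l$ be a duplicate-free list over $V$ with the following property: for any two positions $i < j$ of $l$ with $l_i \in S$, $l_j \in S$, and some position $m$ with $i < m < j$ and $l_m \notin S \cup Z$, there exists a position $m'$ with $i < m' < j$ and $l_{m'} \in Z$. Then the number of maximal contiguous blocks of $l$ consisting of elements of $S$ is at most $(\text{the number of elements of } Z \text{ occurring in } l) + 1$. In particular, if $|Z| \leq w$ then $l$ has at most $w + 1$ maximal $S$-blocks. -/

import Mathlib

theorem stmt_13 {V : Type*} [DecidableEq V] (S Z : Finset V) (hSZ : Disjoint S Z)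
    (l : List V) (hnd : l.Nodup)
    (hguard : ∀ i j m : Fin l.length, i < m → m < j →
      l.get i ∈ S → l.get j ∈ S → l.get m ∉ S → l.get m ∉ Z →
      ∃ m' : Fin l.length, i < m' ∧ m' < j ∧ l.get m' ∈ Z) :
    (Finset.univ.filter (fun i : Fin l.length =>
        l.get i ∈ S ∧ ∀ j : Fin l.length, (j : ℕ) + 1 = (i : ℕ) → l.get j ∉ S)).card ≤
      (l.toFinset.filter (fun x => x ∈ Z)).card + 1 ∧
    ∀ w : ℕ, Z.card ≤ w →
      (Finset.univ.filter (fun i : Fin l.length =>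
        l.get i ∈ S ∧ ∀ j : Fin l.length, (j : ℕ) + 1 = (i : ℕ) → l.get j ∉ S)).card ≤ w + 1 := by
  set T := Finset.univ.filter (fun i : Fin l.length =>
        l.get i ∈ S ∧ ∀ j : Fin l.length, (j : ℕ) + 1 = (i : ℕ) → l.get j ∉ S) with hTdef
  set ZL := l.toFinset.filter (fun x => x ∈ Z) with hZLdef
  have hmemT : ∀ i : Fin l.length, i ∈ T ↔
      (l.get i ∈ S ∧ ∀ j : Fin l.length, (j : ℕ) + 1 = (i : ℕ) → l.get j ∉ S) := by
    intro i; simp [hTdef]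
  have main : T.card ≤ ZL.card + 1 := by
    rcases T.eq_empty_or_nonempty with h | h
    · simp [h]
    · set i₀ := T.min' h with hi₀
      have hi₀T : i₀ ∈ T := T.min'_mem h
      haveI : Inhabited (Fin l.length) := ⟨i₀⟩
      have key : ∀ i ∈ T.erase i₀, ∃ m' : Fin l.length,
          m' < i ∧ l.get m' ∈ Z ∧ ∀ q ∈ T, q < i → q < m' := by
        intro i hi
        obtain ⟨hne, hiT⟩ := Finset.mem_erase.mp hi
        have hi₀lt : i₀ < i := lt_of_le_of_ne (T.min'_le i hiT) (Ne.symm hne)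
        set P := T.filter (fun p => p < i) with hP
        have hPne : P.Nonempty := ⟨i₀, Finset.mem_filter.mpr ⟨hi₀T, hi₀lt⟩⟩
        set p := P.max' hPne with hp
        have hpP : p ∈ P := P.max'_mem hPne
        have hpT : p ∈ T := (Finset.mem_filter.mp hpP).1
        have hpi : p < i := (Finset.mem_filter.mp hpP).2
        have hipos : 1 ≤ (i : ℕ) := by
          have : (p : ℕ) < (i : ℕ) := hpi
          omega
        have hmlt : (i : ℕ) - 1 < l.length := lt_of_le_of_lt (Nat.sub_le _ _) i.isLt
        set m : Fin l.length := ⟨(i : ℕ) - 1, hmlt⟩ with hm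
        have hmS : l.get m ∉ S := by
          refine ((hmemT i).mp hiT).2 m ?_
          simp [hm]; omega
        have hpm : p < m := by
          have hpS : l.get p ∈ S := ((hmemT p).mp hpT).1
          have hpne : (p : ℕ) ≠ (i : ℕ) - 1 := by
            intro hEq
            have : p = m := Fin.ext hEq
            exact hmS (this ▸ hpS)
          have : (p : ℕ) < (i : ℕ) := hpi
          show (p : ℕ) < (m : ℕ)
          simp [hm]; omega
        have hmi : m < i := by
          show ((i:ℕ) - 1) < (i : ℕ); omega
        have hfin : ∃ m' : Fin l.length, p < m' ∧ m' < i ∧ l.get m' ∈ Z := by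
          by_cases hmZ : l.get m ∈ Z
          · exact ⟨m, hpm, hmi, hmZ⟩
          · exact hguard p i m hpm hmi ((hmemT p).mp hpT).1 ((hmemT i).mp hiT).1 hmS hmZ
        obtain ⟨m', hpm', hm'i, hm'Z⟩ := hfin
        refine ⟨m', hm'i, hm'Z, ?_⟩
        intro q hqT hqi
        have : q ≤ p := P.le_max' q (Finset.mem_filter.mpr ⟨hqT, hqi⟩)
        exact lt_of_le_of_lt this hpm'
      choose! f hf1 hf2 hf3 using key
      have hinj : (T.erase i₀).card ≤ ZL.card := by
        apply Finset.card_le_card_of_injOn (fun i => l.get (f i))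
        · intro i hi
          refine Finset.mem_filter.mpr ⟨List.mem_toFinset.mpr (l.get_mem _), hf2 i hi⟩
        · intro a ha b hb hab
          have hget : Function.Injective l.get := (List.nodup_iff_injective_get.mp hnd)
          have hfab : f a = f b := hget hab
          by_contra hne
          rcases lt_or_gt_of_ne hne with hlt | hlt
          · have h1 : a < f b := hf3 b hb a (Finset.mem_erase.mp ha).2 hlt
            have h2 : f a < a := hf1 a ha
            rw [hfab] at h2
            exact absurd (lt_trans h1 h2) (lt_irrefl _)
          · have h1 : b < f a := hf3 a ha b (Finset.mem_erase.mp hb).2 hlt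
            have h2 : f b < b := hf1 b hb
            rw [← hfab] at h2
            exact absurd (lt_trans h1 h2) (lt_irrefl _)
      have hcard : (T.erase i₀).card = T.card - 1 := Finset.card_erase_of_mem hi₀T
      have hTpos : 1 ≤ T.card := Finset.card_pos.mpr h
      omega
  refine ⟨main, ?_⟩
  intro w hw
  have hZL : ZL ⊆ Z := by
    intro x hx; exact (Finset.mem_filter.mp hx).2
  have := Finset.card_le_card hZL
  omega
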